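/- Let p ≡ 1 (mod 4) be prime and h ∈ 𝔽_p with h² = -1. Let L be an integer with (p-1)/2 ≤ L ≤ p-1 and I = {1, ..., L} mod p. Then it cannot happen for any x ∈ I that both hx ∉ I and h⁻¹x ∉ I; equivalently, if hx ≡ -s₁ and h⁻¹x ≡ -s₂ (mod p) with 1 ≤ s₁, s₂ ≤ p-L-1, then s₁ + s₂ ≡ 0 (mod p), which is impossible. -/
import Mathlib


open Finset

/-- If h² = -1 in 𝔽_p and I = {1,…,L} with (p-1)/2 ≤ L ≤ p-1, then it cannot
happen that both hx ∉ I and h⁻¹x ∉ I for some x ∈ I. -/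
theorem no_double_escape
    (p : ℕ) [Fact p.Prime] (hp4 : p % 4 = 1)
    (h : ZMod p) (hh : h ^ 2 = -1)
    (L : ℕ) (hL1 : p - 1 ≤ 2 * L) (hL2 : L ≤ p - 1)
    (I : Finset (ZMod p))
    (hI : I = (Finset.Icc 1 L).image (fun i : ℕ => (i : ZMod p))) :
    ∀ x ∈ I, ¬(h * x ∉ I ∧ h⁻¹ * x ∉ I) := by
  have hp : p.Prime := Fact.out
  have hp1 : 1 < p := hp.one_lt
  have hmem : ∀ y : ZMod p, y ∈ I ↔ 1 ≤ y.val ∧ y.val ≤ L := by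
    intro y
    subst hI
    simp only [Finset.mem_image, Finset.mem_Icc]
    constructor
    · rintro ⟨i, ⟨hi1, hi2⟩, rfl⟩
      have : (i : ZMod p).val = i := ZMod.val_cast_of_lt (by omega)
      omega
    · rintro ⟨h1, h2⟩
      exact ⟨y.val, ⟨h1, h2⟩, by simp [ZMod.natCast_val, ZMod.cast_id]⟩
  rintro x hx ⟨hx1, hx2⟩
  obtain ⟨hxv1, hxv2⟩ := (hmem x).1 hx
  have hxne : x ≠ 0 := by
    intro h0; rw [h0] at hxv1; simp [ZMod.val_zero] at hxv1
  have hne1 : (-1 : ZMod p) ≠ 0 := by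
    simp [neg_eq_zero]
  have hhne : h ≠ 0 := by
    intro h0; rw [h0] at hh; simp at hh
  have hinv : h⁻¹ = -h := inv_eq_of_mul_eq_one_right (by linear_combination -hh)
  rw [hinv] at hx2
  have hx2' : -(h * x) ∉ I := by rwa [neg_mul] at hx2
  have hzne : h * x ≠ 0 := mul_ne_zero hhne hxne
  have ha : (h * x).val ≠ 0 := by
    simpa [ZMod.val_eq_zero] using hzne
  have hb : (-(h * x)).val ≠ 0 := by
    simpa [ZMod.val_eq_zero] using neg_ne_zero.mpr hzne
  have haL : ¬(1 ≤ (h * x).val ∧ (h * x).val ≤ L) := fun hc => hx1 ((hmem _).2 hc)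
  have hbL : ¬(1 ≤ (-(h * x)).val ∧ (-(h * x)).val ≤ L) := fun hc => hx2' ((hmem _).2 hc)
  haveI : NeZero (h * x) := ⟨hzne⟩
  have hsum : (-(h * x)).val = p - (h * x).val := ZMod.val_neg_of_ne_zero (h * x)
  have halt : (h * x).val < p := ZMod.val_lt _
  omega
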